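/- Let X, X_1, ..., X_{N_s} be real-valued random variables on a probability space that are independent and identically distributed, with N_s ≥ 2. Let X̂ = (1/N_s)·Σ_{i=1}^{N_s} X_i be the sample mean and σ̂ = √((1/N_s)·Σ_{i=1}^{N_s}(X_i − X̂)²) the sample standard deviation, and assume σ̂ > 0 almost surely. Then for every λ > 0, P(X − X̂ ≥ λ·σ̂) ≤ (√(N_s+1) + λ)² / (λ²·N_s + (√(N_s+1) + λ)²). -/

import Mathlib

open MeasureTheory ProbabilityTheory Real

open scoped Classical ENNReal

noncomputable def loomean (n : ℕ) (j : Fin (n+1)) (v : Fin (n+1) → ℝ) : ℝ :=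
  ((∑ i, v i) - v j) / n

noncomputable def loosd (n : ℕ) (j : Fin (n+1)) (v : Fin (n+1) → ℝ) : ℝ :=
  Real.sqrt (((∑ i, (v i - loomean n j v)^2) - (v j - loomean n j v)^2) / n)

def Ej (n : ℕ) (lam : ℝ) (j : Fin (n+1)) : Set (Fin (n+1) → ℝ) :=
  {v | lam * loosd n j v ≤ v j - loomean n j v}

lemma expand_sum {n : ℕ} (v : Fin (n+1) → ℝ) (c : ℝ) :
    ∑ i, (v i - c)^2 = (∑ i, (v i)^2) - 2*c*(∑ i, v i) + ((n:ℝ)+1)*c^2 := by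
  have h : ∀ i : Fin (n+1), (v i - c)^2 = (v i)^2 - (v i)*(2*c) + c^2 := fun i => by ring
  rw [Finset.sum_congr rfl fun i _ => h i, Finset.sum_add_distrib, Finset.sum_sub_distrib,
    ← Finset.sum_mul, Finset.sum_const, Finset.card_univ, Fintype.card_fin, nsmul_eq_mul]
  push_cast
  ring

set_option maxHeartbeats 1000000 in
lemma mem_cond {n : ℕ} (hn : 2 ≤ n) {lam : ℝ} (hlam : 0 < lam)
    (v : Fin (n+1) → ℝ) (j : Fin (n+1))
    (hj : v ∈ Ej n lam j) :
    0 ≤ v j - (∑ i, v i)/((n:ℝ)+1) ∧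
    lam^2 * n * (∑ i, (v i - (∑ i, v i)/((n:ℝ)+1))^2)
      ≤ ((n:ℝ)+1) * ((n:ℝ)+1+lam^2) * (v j - (∑ i, v i)/((n:ℝ)+1))^2 := by
  have hn0 : 0 < n := by omega
  have hn' : (0:ℝ) < n := by exact_mod_cast hn0
  have hn1 : (0:ℝ) < (n:ℝ)+1 := by linarith
  have hne : (n:ℝ) ≠ 0 := hn'.ne'
  have hne1 : ((n:ℝ)+1) ≠ 0 := hn1.ne'
  set Sv := ∑ i, v i with hSv
  set Q := ∑ i, (v i)^2 with hQ
  set m := Sv/((n:ℝ)+1) with hm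
  set c := (Sv - v j)/(n:ℝ) with hc
  set q := ((∑ i, (v i - c)^2) - (v j - c)^2)/(n:ℝ) with hq
  have hq0 : 0 ≤ q := by
    apply div_nonneg _ hn'.le
    have hle : (v j - c)^2 ≤ ∑ i, (v i - c)^2 :=
      Finset.single_le_sum (fun i _ => sq_nonneg (v i - c)) (Finset.mem_univ j)
    linarith
  have hcm : loomean n j v = c := by rw [loomean, hc, hSv]
  have hloosd : loosd n j v = Real.sqrt q := by
    rw [hq]; unfold loosd; rw [hcm]
  have hjj : lam * Real.sqrt q ≤ v j - c := by
    have h := hj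
    simp only [Ej, Set.mem_setOf_eq] at h
    rwa [hloosd, hcm] at h
  have hvjc : 0 ≤ v j - c := le_trans (by positivity) hjj
  have h2 : (lam * Real.sqrt q)^2 ≤ (v j - c)^2 := pow_le_pow_left₀ (by positivity) hjj 2
  rw [mul_pow, Real.sq_sqrt hq0] at h2
  have hS_eq : ∑ i, (v i - m)^2 = Q - 2*m*Sv + ((n:ℝ)+1)*m^2 := expand_sum v m
  have hvq : ∑ i, (v i - c)^2 = Q - 2*c*Sv + ((n:ℝ)+1)*c^2 := expand_sum v c
  set S := ∑ i, (v i - m)^2 with hSdef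
  set d := v j - m with hd
  have hvjc' : v j - c = ((n:ℝ)+1)*d/n := by
    rw [hd, hc, hm]; field_simp; ring
  have hid : q * (n:ℝ)^2 = S * n - ((n:ℝ)+1)*d^2 := by
    rw [hq, hvq, hS_eq, hd, hc, hm]
    field_simp
    ring
  have hd0 : 0 ≤ d := by
    rw [hvjc'] at hvjc
    have h' : 0 ≤ ((n:ℝ)+1)*d := by
      have := mul_nonneg hvjc hn'.le
      rwa [div_mul_cancel₀] at this
      exact hne
    nlinarith [h', hn1]
  refine ⟨hd0, ?_⟩
  have h3 : lam^2*q*(n:ℝ)^2 ≤ (v j - c)^2*(n:ℝ)^2 :=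
    mul_le_mul_of_nonneg_right h2 (sq_nonneg _)
  have h4 : (v j - c)^2*(n:ℝ)^2 = (((n:ℝ)+1)*d)^2 := by
    rw [hvjc']; field_simp
  have h5 : lam^2*(q*(n:ℝ)^2) ≤ (((n:ℝ)+1)*d)^2 := by
    rw [← h4]; nlinarith [h3]
  rw [hid] at h5
  nlinarith [h5]

lemma count_bound {n : ℕ} (hn : 2 ≤ n) {lam : ℝ} (hlam : 0 < lam)
    (v : Fin (n+1) → ℝ)
    (hS : 0 < ∑ i, (v i - (∑ i, v i)/((n:ℝ)+1))^2) :
    ((Finset.univ.filter (fun j => v ∈ Ej n lam j)).card : ℝ)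
      ≤ ((n:ℝ)+1) * ((n:ℝ)+1+lam^2) / (lam^2*n + ((n:ℝ)+1+lam^2)) := by
  have hn0 : 0 < n := by omega
  have hn' : (0:ℝ) < n := by exact_mod_cast hn0
  have hn1 : (0:ℝ) < (n:ℝ)+1 := by linarith
  set m := (∑ i, v i)/((n:ℝ)+1) with hm
  set S := ∑ i, (v i - m)^2 with hSdef
  set A := (n:ℝ)+1+lam^2 with hA
  have hApos : 0 < A := by positivity
  set b := Real.sqrt (lam^2*(n:ℝ)*S/(((n:ℝ)+1)*A)) with hbdef
  have hb2 : b^2 = lam^2*(n:ℝ)*S/(((n:ℝ)+1)*A) := Real.sq_sqrt (by positivity)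
  have hb : 0 < b := Real.sqrt_pos.2 (by positivity)
  set a := b*A/(lam^2*(n:ℝ)) with ha
  have hapos : 0 < a := by positivity
  set F := Finset.univ.filter (fun j => v ∈ Ej n lam j) with hF
  -- each member exceeds b
  have hmem : ∀ j ∈ F, b ≤ v j - m := by
    intro j hjF
    have hj : v ∈ Ej n lam j := (Finset.mem_filter.1 hjF).2
    obtain ⟨h1, h2⟩ := mem_cond hn hlam v j hj
    rw [← hm] at h1 h2
    rw [← hSdef, ← hA] at h2
    have hw2 : b^2 ≤ (v j - m)^2 := by
      rw [hb2, div_le_iff₀ (by positivity)]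
      nlinarith [h2]
    calc b = Real.sqrt (b^2) := (Real.sqrt_sq hb.le).symm
      _ ≤ Real.sqrt ((v j - m)^2) := Real.sqrt_le_sqrt hw2
      _ = v j - m := Real.sqrt_sq h1
  -- sum of centered values is zero
  have hsum0 : ∑ j, (v j - m) = 0 := by
    rw [Finset.sum_sub_distrib, Finset.sum_const, Finset.card_univ, Fintype.card_fin,
      nsmul_eq_mul, hm]
    push_cast
    field_simp
    ring
  have htot : ∑ j, (v j - m + a)^2 = S + ((n:ℝ)+1)*a^2 := by
    have h : ∀ j : Fin (n+1), (v j - m + a)^2 = (v j - m)^2 + (v j - m)*(2*a) + a^2 :=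
      fun j => by ring
    rw [Finset.sum_congr rfl fun j _ => h j, Finset.sum_add_distrib, Finset.sum_add_distrib,
      ← Finset.sum_mul, hsum0, Finset.sum_const, Finset.card_univ, Fintype.card_fin,
      nsmul_eq_mul]
    push_cast
    ring
  have h1 : (F.card : ℝ)*(b+a)^2 ≤ S + ((n:ℝ)+1)*a^2 := by
    have h1a : F.card • ((b+a)^2) ≤ ∑ j ∈ F, (v j - m + a)^2 :=
      Finset.card_nsmul_le_sum F _ _ (fun j hj => by
        have := hmem j hj
        have hba : 0 ≤ b + a := by positivity
        apply pow_le_pow_left₀ hba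
        · linarith
        )
    have h1b : ∑ j ∈ F, (v j - m + a)^2 ≤ ∑ j, (v j - m + a)^2 :=
      Finset.sum_le_sum_of_subset_of_nonneg (Finset.subset_univ F)
        (fun j _ _ => sq_nonneg _)
    rw [nsmul_eq_mul] at h1a
    calc (F.card : ℝ)*(b+a)^2 ≤ ∑ j ∈ F, (v j - m + a)^2 := h1a
      _ ≤ ∑ j, (v j - m + a)^2 := h1b
      _ = S + ((n:ℝ)+1)*a^2 := htot
  have hS_eq : S = ((n:ℝ)+1)*A*b^2/(lam^2*(n:ℝ)) := by
    rw [hb2]; field_simp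
  have e1 : (b+a)^2 = (lam^2*(n:ℝ)+A)^2*b^2/(lam^2*(n:ℝ))^2 := by
    rw [ha]; field_simp
  have e2 : S + ((n:ℝ)+1)*a^2 = ((n:ℝ)+1)*A*(lam^2*(n:ℝ)+A)*b^2/(lam^2*(n:ℝ))^2 := by
    rw [hS_eq, ha]; field_simp
  have hX : 0 < (lam^2*(n:ℝ)+A)*b^2/(lam^2*(n:ℝ))^2 := by positivity
  have h1'' : ((F.card : ℝ)*(lam^2*(n:ℝ)+A)) * ((lam^2*(n:ℝ)+A)*b^2/(lam^2*(n:ℝ))^2)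
      ≤ (((n:ℝ)+1)*A) * ((lam^2*(n:ℝ)+A)*b^2/(lam^2*(n:ℝ))^2) := by
    calc ((F.card : ℝ)*(lam^2*(n:ℝ)+A)) * ((lam^2*(n:ℝ)+A)*b^2/(lam^2*(n:ℝ))^2)
        = (F.card : ℝ)*((lam^2*(n:ℝ)+A)^2*b^2/(lam^2*(n:ℝ))^2) := by ring
      _ ≤ S + ((n:ℝ)+1)*a^2 := by rw [← e1]; exact h1
      _ = (((n:ℝ)+1)*A) * ((lam^2*(n:ℝ)+A)*b^2/(lam^2*(n:ℝ))^2) := by rw [e2]; ring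
  have h2 : (F.card : ℝ)*(lam^2*(n:ℝ)+A) ≤ ((n:ℝ)+1)*A :=
    le_of_mul_le_mul_right h1'' hX
  rw [le_div_iff₀ (by positivity)]
  exact h2

lemma loomean_comp {n : ℕ} (e : Fin (n+1) ≃ Fin (n+1)) (v : Fin (n+1) → ℝ) (j : Fin (n+1)) :
    loomean n j (v ∘ e) = loomean n (e j) v := by
  unfold loomean
  simp only [Function.comp_apply]
  rw [Equiv.sum_comp e v]

lemma loosd_comp {n : ℕ} (e : Fin (n+1) ≃ Fin (n+1)) (v : Fin (n+1) → ℝ) (j : Fin (n+1)) :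
    loosd n j (v ∘ e) = loosd n (e j) v := by
  unfold loosd
  rw [loomean_comp]
  simp only [Function.comp_apply]
  rw [Equiv.sum_comp e (fun x => (v x - loomean n (e j) v)^2)]

lemma Ej_preimage {n : ℕ} (lam : ℝ) (e : Fin (n+1) ≃ Fin (n+1)) (j : Fin (n+1)) :
    (fun v : Fin (n+1) → ℝ => v ∘ e) ⁻¹' (Ej n lam j) = Ej n lam (e j) := by
  ext v
  simp only [Set.mem_preimage, Ej, Set.mem_setOf_eq, loomean_comp, loosd_comp,
    Function.comp_apply]

lemma measurable_loomean (n : ℕ) (j : Fin (n+1)) : Measurable (loomean n j) := by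
  unfold loomean
  exact ((Finset.measurable_sum Finset.univ (fun i _ => measurable_pi_apply i)).sub
    (measurable_pi_apply j)).div_const _

lemma measurable_loosd (n : ℕ) (j : Fin (n+1)) : Measurable (loosd n j) := by
  unfold loosd
  apply Measurable.sqrt
  apply Measurable.div_const
  apply Measurable.sub
  · exact Finset.measurable_sum Finset.univ fun i _ =>
      ((measurable_pi_apply i).sub (measurable_loomean n j)).pow_const 2
  · exact ((measurable_pi_apply j).sub (measurable_loomean n j)).pow_const 2

lemma measurableSet_Ej (n : ℕ) (lam : ℝ) (j : Fin (n+1)) : MeasurableSet (Ej n lam j) :=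
  measurableSet_le (measurable_const.mul (measurable_loosd n j)) -- typo check
    ((measurable_pi_apply j).sub (measurable_loomean n j))

set_option maxHeartbeats 1000000 in

/-- **Sample-statistics concentration inequality (Theorem 1).**
Let `X, X₁, …, X_{Ns}` be i.i.d. real-valued random variables on a probability
space, `Ns ≥ 2`.  With `X̂` the sample mean and `σ̂` the (uncorrected) sample
standard deviation of `X₁, …, X_{Ns}`, assumed a.s. positive, for every
`λ > 0` we have
`P(X − X̂ ≥ λ σ̂) ≤ (√(Ns+1) + λ)² / (λ² Ns + (√(Ns+1) + λ)²)`. -/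
theorem sample_cantelli_upper
    {Ω : Type*} [MeasurableSpace Ω] (μ : Measure Ω) [IsProbabilityMeasure μ]
    (Ns : ℕ) (hNs : 2 ≤ Ns)
    (X : Ω → ℝ) (Xs : Fin Ns → Ω → ℝ)
    (hXmeas : Measurable X) (hXsmeas : ∀ i, Measurable (Xs i))
    (hIndep : iIndepFun
      (Fin.cons X Xs : Fin (Ns + 1) → Ω → ℝ) μ)
    (hIdent : ∀ i : Fin (Ns + 1),
      IdentDistrib ((Fin.cons X Xs : Fin (Ns + 1) → Ω → ℝ) i) X μ μ)
    (Xhat : Ω → ℝ) (hXhat : ∀ ω, Xhat ω = (1 / (Ns : ℝ)) * ∑ i, Xs i ω)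
    (sd : Ω → ℝ)
    (hsd : ∀ ω, sd ω = Real.sqrt ((1 / (Ns : ℝ)) * ∑ i, (Xs i ω - Xhat ω) ^ 2))
    (hsd_pos : ∀ᵐ ω ∂μ, 0 < sd ω)
    (lam : ℝ) (hlam : 0 < lam) :
    μ {ω | lam * sd ω ≤ X ω - Xhat ω} ≤
      ENNReal.ofReal ((Real.sqrt ((Ns : ℝ) + 1) + lam) ^ 2 /
        (lam ^ 2 * (Ns : ℝ) + (Real.sqrt ((Ns : ℝ) + 1) + lam) ^ 2)) := by
  classical
  have hn0 : 0 < Ns := by omega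
  have hn' : (0:ℝ) < Ns := by exact_mod_cast hn0
  have hn1 : (0:ℝ) < (Ns:ℝ)+1 := by linarith
  set Y : Fin (Ns+1) → Ω → ℝ := Fin.cons X Xs with hY
  have hYmeas : ∀ i, Measurable (Y i) := fun i => by
    induction i using Fin.cases with
    | zero => simpa [hY] using hXmeas
    | succ i => simpa [hY] using hXsmeas i
  set T : Ω → (Fin (Ns+1) → ℝ) := fun ω i => Y i ω with hT
  have hTmeas : Measurable T := measurable_pi_lambda _ hYmeas
  haveI hprob : IsProbabilityMeasure (μ.map X) := Measure.isProbabilityMeasure_map hXmeas.aemeasurable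
  have hpi : μ.map T = Measure.pi (fun _ : Fin (Ns+1) => μ.map X) := by
    symm
    apply Measure.pi_eq
    intro s hs
    rw [Measure.map_apply hTmeas (MeasurableSet.univ_pi hs)]
    have hpre : T ⁻¹' Set.pi Set.univ s = ⋂ i, Y i ⁻¹' s i := by
      ext ω; simp [hT, Set.mem_pi]
    rw [hpre]
    rw [show (⋂ i, Y i ⁻¹' s i) = ⋂ i ∈ Finset.univ, Y i ⁻¹' s i by simp]
    rw [hIndep.measure_inter_preimage_eq_mul (S := Finset.univ) (sets := s) (fun i _ => hs i)]
    exact Finset.prod_congr rfl fun i _ => by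
      rw [← Measure.map_apply (hYmeas i) (hs i), (hIdent i).map_eq]
  have hperm : ∀ e : Fin (Ns+1) ≃ Fin (Ns+1),
      (μ.map T).map (fun v => v ∘ e) = μ.map T := by
    intro e
    have hme : Measurable (fun v : Fin (Ns+1) → ℝ => v ∘ e) :=
      measurable_pi_lambda _ (fun i => measurable_pi_apply (e i))
    rw [hpi]
    symm
    apply Measure.pi_eq
    intro s hs
    rw [Measure.map_apply hme (MeasurableSet.univ_pi hs)]
    have hpre : (fun v : Fin (Ns+1) → ℝ => v ∘ e) ⁻¹' Set.pi Set.univ s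
        = Set.pi Set.univ (fun i => s (e.symm i)) := by
      ext v
      simp only [Set.mem_preimage, Set.mem_pi, Set.mem_univ, true_implies,
        Function.comp_apply]
      constructor
      · intro h i
        have hh := h (e.symm i)
        rwa [Equiv.apply_symm_apply] at hh
      · intro h i
        have hh := h (e i)
        rwa [Equiv.symm_apply_apply] at hh
    rw [hpre, Measure.pi_pi]
    exact Equiv.prod_comp e.symm (fun i => (μ.map X) (s i))
  have hEmeas := measurableSet_Ej Ns lam
  have hAj : ∀ j : Fin (Ns+1), μ (T ⁻¹' Ej Ns lam j) = μ (T ⁻¹' Ej Ns lam 0) := by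
    intro j
    have hme : Measurable (fun v : Fin (Ns+1) → ℝ => v ∘ (Equiv.swap (0:Fin (Ns+1)) j)) :=
      measurable_pi_lambda _ (fun i => measurable_pi_apply _)
    have h0 : Ej Ns lam j
        = (fun v : Fin (Ns+1) → ℝ => v ∘ (Equiv.swap (0:Fin (Ns+1)) j)) ⁻¹' (Ej Ns lam 0) := by
      rw [Ej_preimage lam (Equiv.swap (0:Fin (Ns+1)) j) 0, Equiv.swap_apply_left]
    rw [← Measure.map_apply hTmeas (hEmeas j), ← Measure.map_apply hTmeas (hEmeas 0),
      h0, ← Measure.map_apply hme (hEmeas 0), hperm]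
  have h00 : ∀ ω, T ω 0 = X ω := fun ω => by simp [hT, hY]
  have hsucc : ∀ ω (i : Fin Ns), T ω i.succ = Xs i ω := fun ω i => by simp [hT, hY]
  have hsum_succ : ∀ ω, ∑ i : Fin (Ns+1), T ω i = X ω + ∑ i, Xs i ω := by
    intro ω
    rw [Fin.sum_univ_succ, h00]
    exact congrArg _ (Finset.sum_congr rfl fun i _ => hsucc ω i)
  have hmean0 : ∀ ω, loomean Ns 0 (T ω) = Xhat ω := by
    intro ω
    rw [loomean, hsum_succ ω, h00, hXhat ω]
    ring
  have hsd0 : ∀ ω, loosd Ns 0 (T ω) = sd ω := by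
    intro ω
    rw [loosd, hmean0 ω, hsd ω]
    congr 1
    rw [Fin.sum_univ_succ]
    rw [Finset.sum_congr rfl fun i _ => by rw [hsucc ω i]]
    ring
  have hset : {ω | lam * sd ω ≤ X ω - Xhat ω} = T ⁻¹' (Ej Ns lam 0) := by
    ext ω
    simp only [Set.mem_setOf_eq, Set.mem_preimage, Ej, hsd0 ω, hmean0 ω, h00 ω]
  set K : ℝ := ((Ns:ℝ)+1) * ((Ns:ℝ)+1+lam^2) / (lam^2*Ns + ((Ns:ℝ)+1+lam^2)) with hK
  have hGood : ∀ᵐ ω ∂μ,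
      (∑ j : Fin (Ns+1), (T ⁻¹' (Ej Ns lam j)).indicator (fun _ => (1:ℝ≥0∞)) ω)
        ≤ ENNReal.ofReal K := by
    filter_upwards [hsd_pos] with ω hω
    have hSpos : 0 < ∑ i, (T ω i - (∑ i, T ω i)/((Ns:ℝ)+1))^2 := by
      by_contra hcon
      push_neg at hcon
      have hz : ∑ i, (T ω i - (∑ i, T ω i)/((Ns:ℝ)+1))^2 = 0 :=
        le_antisymm hcon (Finset.sum_nonneg fun i _ => sq_nonneg _)
      have hzz := (Finset.sum_eq_zero_iff_of_nonneg (fun i _ => sq_nonneg _)).1 hz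
      have hconst : ∀ i, T ω i = (∑ i, T ω i)/((Ns:ℝ)+1) := by
        intro i
        have h1 := hzz i (Finset.mem_univ i)
        have h2 : T ω i - (∑ i, T ω i)/((Ns:ℝ)+1) = 0 :=
          pow_eq_zero_iff (by norm_num) |>.1 h1
        linarith [h2]
      set mm := (∑ i, T ω i)/((Ns:ℝ)+1) with hmm
      have hXsm : ∀ i : Fin Ns, Xs i ω = mm := fun i => by
        rw [← hsucc ω i]; exact hconst i.succ
      have hXhm : Xhat ω = mm := by
        rw [hXhat, Finset.sum_congr rfl fun i _ => hXsm i, Finset.sum_const,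
          Finset.card_univ, Fintype.card_fin, nsmul_eq_mul]
        field_simp
      have hsdz : sd ω = 0 := by
        rw [hsd, Finset.sum_congr rfl (fun i _ => by rw [hXsm i, hXhm, sub_self])]
        simp
      linarith
    have hcard := count_bound hNs hlam (T ω) hSpos
    have hindsum : (∑ j : Fin (Ns+1), (T ⁻¹' (Ej Ns lam j)).indicator (fun _ => (1:ℝ≥0∞)) ω)
        = ((Finset.univ.filter (fun j => T ω ∈ Ej Ns lam j)).card : ℝ≥0∞) := by
      rw [← Finset.sum_boole]
      exact Finset.sum_congr rfl fun j _ => by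
        simp [Set.indicator_apply, Set.mem_preimage]
    rw [hindsum]
    calc ((Finset.univ.filter (fun j => T ω ∈ Ej Ns lam j)).card : ℝ≥0∞)
        = ENNReal.ofReal ((Finset.univ.filter (fun j => T ω ∈ Ej Ns lam j)).card : ℝ) := by
          rw [ENNReal.ofReal_natCast]
      _ ≤ ENNReal.ofReal K := ENNReal.ofReal_le_ofReal hcard
  have hmeasA : ∀ j, MeasurableSet (T ⁻¹' Ej Ns lam j) := fun j => hTmeas (hEmeas j)
  have hsum_meas : ∑ j : Fin (Ns+1), μ (T ⁻¹' Ej Ns lam j) ≤ ENNReal.ofReal K := by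
    calc ∑ j : Fin (Ns+1), μ (T ⁻¹' Ej Ns lam j)
        = ∑ j : Fin (Ns+1), ∫⁻ ω, (T ⁻¹' Ej Ns lam j).indicator (fun _ => (1:ℝ≥0∞)) ω ∂μ := by
          refine Finset.sum_congr rfl fun j _ => ?_
          rw [lintegral_indicator (hmeasA j)]
          simp
      _ = ∫⁻ ω, ∑ j : Fin (Ns+1), (T ⁻¹' Ej Ns lam j).indicator (fun _ => (1:ℝ≥0∞)) ω ∂μ :=
          (lintegral_finset_sum _ (fun j _ => (measurable_one.indicator (hmeasA j)))).symm
      _ ≤ ∫⁻ _, ENNReal.ofReal K ∂μ := lintegral_mono_ae hGood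
      _ = ENNReal.ofReal K := by simp
  have hconst_sum : ∑ j : Fin (Ns+1), μ (T ⁻¹' Ej Ns lam j)
      = ((Ns:ℝ≥0∞)+1) * μ (T ⁻¹' Ej Ns lam 0) := by
    rw [Finset.sum_congr rfl fun j _ => hAj j, Finset.sum_const, Finset.card_univ,
      Fintype.card_fin, nsmul_eq_mul]
    push_cast
    ring
  have hμ0 : μ (T ⁻¹' Ej Ns lam 0) ≤ ENNReal.ofReal K / ((Ns:ℝ≥0∞)+1) := by
    rw [ENNReal.le_div_iff_mul_le (Or.inl (by simp)) (Or.inl (by simp))]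
    rw [mul_comm, ← hconst_sum]
    exact hsum_meas
  rw [hset]
  refine le_trans hμ0 ?_
  have hdiv : ENNReal.ofReal K / ((Ns:ℝ≥0∞)+1) = ENNReal.ofReal (K / ((Ns:ℝ)+1)) := by
    rw [ENNReal.ofReal_div_of_pos hn1]
    congr 1
    rw [ENNReal.ofReal_add (by positivity) zero_le_one]
    simp
  rw [hdiv]
  apply ENNReal.ofReal_le_ofReal
  have hs2 : Real.sqrt ((Ns:ℝ)+1)^2 = (Ns:ℝ)+1 := Real.sq_sqrt (by positivity)
  have hsn : 0 ≤ Real.sqrt ((Ns:ℝ)+1) := Real.sqrt_nonneg _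
  set A := (Ns:ℝ)+1+lam^2 with hA
  set B := (Real.sqrt ((Ns:ℝ)+1) + lam)^2 with hB
  have hAB : A ≤ B := by
    rw [hA, hB]; nlinarith
  have hApos : 0 < A := by positivity
  have hBpos : 0 < B := lt_of_lt_of_le hApos hAB
  have hKeq : K / ((Ns:ℝ)+1) = A / (lam^2*Ns + A) := by
    rw [hK]; field_simp
  rw [hKeq, div_le_div_iff₀ (by positivity) (by positivity)]
  nlinarith [mul_le_mul_of_nonneg_left hAB (by positivity : (0:ℝ) ≤ lam^2*Ns)]
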